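/- Let k ≥ 1 be an integer and let t₀ be a real number. Then there do not exist formal power series u, v, w ∈ ℝ⟦X⟧ such that D w = 0, D v = w, and (X + t₀)·v·(D u) − (X + t₀)·u + 1 = 0, where the constant coefficient of v equals 0 and the constant coefficient of w equals 1/k. -/

import Mathlib

open PowerSeries

/-- For `k ≥ 1` and any expansion point `t₀`, there is no formal power series solution
`u, v, w ∈ ℝ⟦X⟧` of the system `ẇ = 0`, `v̇ = w`, `t·v·u̇ − t·u + 1 = 0` (with `t`
represented by `X + t₀`) whose initial data satisfy `v(t₀) = 0` and `w(t₀) = 1/k`. -/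
theorem stmt_11 (k : ℕ) (hk : 1 ≤ k) (t₀ : ℝ) :
    ¬ ∃ u v w : ℝ⟦X⟧,
        PowerSeries.derivative ℝ w = 0 ∧
        PowerSeries.derivative ℝ v = w ∧
        (PowerSeries.X + PowerSeries.C t₀) * v * (PowerSeries.derivative ℝ u) -
          (PowerSeries.X + PowerSeries.C t₀) * u + 1 = 0 ∧
        PowerSeries.constantCoeff v = 0 ∧
        PowerSeries.constantCoeff w = 1 / (k : ℝ) := by
  rintro ⟨u, v, w, hw, hv, heq, hv0, hw0⟩
  set a : ℝ := 1 / (k : ℝ) with ha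
  have hkR : (k : ℝ) ≠ 0 := Nat.cast_ne_zero.mpr (by omega)
  have haz : a ≠ 0 := one_div_ne_zero hkR
  -- w = C a
  have hwc : ∀ n, coeff n w = if n = 0 then a else 0 := by
    intro n
    cases n with
    | zero => simpa [coeff_zero_eq_constantCoeff_apply] using hw0
    | succ m =>
      have := congrArg (coeff m) hw
      rw [coeff_derivative, map_zero] at this
      have := mul_eq_zero.mp this
      rcases this with h | h
      · simpa using h
      · exfalso; have : (m : ℝ) + 1 > 0 := by positivity
        linarith
  -- v = C a * X
  have hvc : v = C a * X := by
    ext n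
    cases n with
    | zero => simp [coeff_zero_eq_constantCoeff_apply, hv0, constantCoeff_X]
    | succ m =>
      have h1 := congrArg (coeff m) hv
      rw [coeff_derivative] at h1
      rw [hwc m] at h1
      rw [coeff_C_mul, coeff_X]
      cases m with
      | zero =>
        norm_num at h1 ⊢
        linarith
      | succ p =>
        simp only [if_neg (by omega : ¬ p + 1 = 0)] at h1
        have : coeff (p + 1 + 1) v = 0 := by
          have hne : ((p:ℝ) + 1 + 1) ≠ 0 := by positivity
          have := mul_eq_zero.mp h1
          rcases this with h | h
          · exact h
          · exact absurd h (by push_cast; positivity)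
        simp [this, if_neg (by omega : ¬ p + 1 + 1 = 1)]
  set d : ℝ⟦X⟧ := PowerSeries.derivative ℝ u with hd
  have heq' : C a * (X * (X * d)) + C (a * t₀) * (X * d) + 1
      = X * u + C t₀ * u := by
    rw [hvc] at heq
    have : C (a * t₀) = C a * C t₀ := by rw [map_mul]
    rw [this]
    linear_combination heq
  -- base: t₀ * u₀ = 1
  have h0 : t₀ * coeff 0 u = 1 := by
    have := congrArg (coeff 0) heq'
    simp only [map_add, coeff_C_mul, coeff_zero_X_mul, coeff_one, if_pos rfl,
      mul_zero, zero_add, add_zero] at this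
    norm_num at this
    rw [coeff_zero_eq_constantCoeff_apply]
    linarith
  -- recursion: for n ≥ 1
  have hrec : ∀ n : ℕ, t₀ * coeff (n+1) u * (((n:ℝ)+1) - k)
      = coeff n u * ((k : ℝ) - n) := by
    intro n
    have := congrArg (coeff (n+1)) heq'
    simp only [map_add, coeff_C_mul, coeff_succ_X_mul, coeff_one] at this
    cases n with
    | zero =>
      simp only [coeff_zero_X_mul, if_neg (Nat.succ_ne_zero 0)] at this
      rw [hd, coeff_derivative] at this
      have hrw : a = 1 / (k:ℝ) := ha
      rw [hrw] at this
      field_simp [hrw] at this ⊢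
      ring_nf at this ⊢
      linarith
    | succ m =>
      simp only [coeff_succ_X_mul, if_neg (by omega : ¬ m + 1 + 1 = 0), add_zero] at this
      rw [hd, coeff_derivative, coeff_derivative] at this
      have hrw : a = 1 / (k:ℝ) := ha
      rw [hrw] at this
      field_simp [hrw] at this ⊢
      ring_nf at this ⊢
      push_cast at this ⊢
      ring_nf at this ⊢
      linarith
  have ht₀ : t₀ ≠ 0 := by intro h; rw [h] at h0; simp at h0
  -- u_n ≠ 0 for n < k
  have hnz : ∀ n, n < k → coeff n u ≠ 0 := by
    intro n
    induction n with
    | zero =>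
      intro _ h
      rw [h, mul_zero] at h0; exact zero_ne_one h0
    | succ m ih =>
      intro hm h
      have h1 := hrec m
      rw [h, mul_zero, zero_mul] at h1
      have h2 : coeff m u = 0 ∨ ((k:ℝ) - m) = 0 := mul_eq_zero.mp h1.symm
      rcases h2 with h2 | h2
      · exact ih (by omega) h2
      · have : (k : ℝ) = m := by linarith
        have : k = m := by exact_mod_cast this
        omega
  -- contradiction at n = k
  obtain ⟨p, hp⟩ : ∃ p, k = p + 1 := ⟨k - 1, by omega⟩
  have h1 := hrec p
  rw [hp] at h1
  push_cast at h1
  ring_nf at h1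
  have hz : coeff p u = 0 := by nlinarith [h1]
  exact hnz p (by omega) hz
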